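/- Let δ > 0, τ > 0, and let (A, ζ₄) with A > 0 be a nontrivial equilibrium (f₁ = f₂ = 0), with Jacobian J there. If 0 < A < 1 then det J < 0, so J has one positive and one negative real eigenvalue (the equilibrium is a saddle). If A > 1 then det J > 0, and both eigenvalues of J have negative real part if and only if τ < 1/δ; moreover, when A > 1 and τ = 1/δ, the eigenvalues of J are the purely imaginary pair ±i√(det J) (a Hopf bifurcation). -/

import Mathlib

open Matrix

/-- Right-hand side of the slow-flow amplitude equation for the 4-node network. -/
noncomputable def f₁ (A ζ₄ : ℝ) : ℝ :=
  (1 / 4) * ((1 - ζ₄) * A + 5 / 4 * A ^ 3 - 5 / 16 * A ^ 5)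

/-- Right-hand side of the autonomous damping dynamics for the 4-node network. -/
noncomputable def f₂ (δ τ A ζ₄ : ℝ) : ℝ :=
  τ⁻¹ * (-ζ₄ + δ + 1 + 5 / 8 * A ^ 2)

/-- Jacobian matrix of the planar vector field `(f₁, f₂)` with respect to `(A, ζ₄)`. -/
noncomputable def J (δ τ A ζ₄ : ℝ) : Matrix (Fin 2) (Fin 2) ℝ :=
  !![deriv (fun a => f₁ a ζ₄) A, deriv (fun z => f₁ A z) ζ₄;
     deriv (fun a => f₂ δ τ a ζ₄) A, deriv (fun z => f₂ δ τ A z) ζ₄]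

/-- Spectrum of a 2×2 matrix over a field is the zero set of its characteristic polynomial. -/
lemma spec2_aux {K : Type*} [Field K] (a b c d : K) :
    spectrum K !![a, b; c, d] = {μ : K | (μ - a) * (μ - d) - b * c = 0} := by
  ext μ
  rw [spectrum.mem_iff, Matrix.isUnit_iff_isUnit_det, isUnit_iff_ne_zero, not_ne_iff]
  have h : (algebraMap K (Matrix (Fin 2) (Fin 2) K)) μ - !![a, b; c, d]
      = !![μ - a, -b; -c, μ - d] := by
    ext i j
    fin_cases i <;> fin_cases j <;>
      simp [Matrix.algebraMap_matrix_apply, Matrix.one_apply]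
  rw [h, Matrix.det_fin_two_of]
  simp only [Set.mem_setOf_eq]
  constructor <;> intro h' <;> linear_combination h'

set_option maxHeartbeats 1000000 in
/-- Stability of the nontrivial equilibria: for `A < 1` the equilibrium is a saddle;
for `A > 1` it is stable iff `τ < 1/δ`, with a Hopf bifurcation (purely imaginary
eigenvalue pair) at `τ = 1/δ`. -/
theorem stmt_6 (δ τ A ζ₄ : ℝ) (hδ : 0 < δ) (hτ : 0 < τ) (hA : 0 < A)
    (h1 : f₁ A ζ₄ = 0) (h2 : f₂ δ τ A ζ₄ = 0) :
    (A < 1 →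
      (J δ τ A ζ₄).det < 0 ∧
      ∃ μ₁ μ₂ : ℝ, μ₁ < 0 ∧ 0 < μ₂ ∧ spectrum ℝ (J δ τ A ζ₄) = {μ₁, μ₂}) ∧
    (1 < A →
      0 < (J δ τ A ζ₄).det ∧
      ((∀ μ ∈ spectrum ℂ ((J δ τ A ζ₄).map Complex.ofReal), μ.re < 0) ↔ τ < 1 / δ)) ∧
    (1 < A → τ = 1 / δ →
      spectrum ℂ ((J δ τ A ζ₄).map Complex.ofReal) =
        {Complex.I * (Real.sqrt (J δ τ A ζ₄).det : ℂ),
         -(Complex.I * (Real.sqrt (J δ τ A ζ₄).det : ℂ))}) := by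
  have hu : (0:ℝ) < τ⁻¹ := inv_pos.mpr hτ
  -- equilibrium relations
  have hz : ζ₄ = δ + 1 + 5/8*A^2 := by
    have h2' : -ζ₄ + δ + 1 + 5/8*A^2 = 0 := by
      rcases mul_eq_zero.mp h2 with h | h
      · exact absurd h (by positivity)
      · linarith [h]
    linarith
  have hδA : δ = 5/8*A^2 - 5/16*A^4 := by
    have h1' : (1 - ζ₄) * A + 5/4 * A^3 - 5/16 * A^5 = 0 := by
      have := h1
      unfold f₁ at this
      rcases mul_eq_zero.mp this with h | h
      · norm_num at h
      · linarith [h]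
    have hfac : A * ((1 - ζ₄) + 5/4*A^2 - 5/16*A^4) = 0 := by linear_combination h1'
    rcases mul_eq_zero.mp hfac with h | h
    · exact absurd h hA.ne'
    · rw [hz] at h; linarith
  -- the Jacobian
  have ha : 1/4*((1-ζ₄) + 15/4*A^2 - 25/16*A^4) = δ := by
    rw [hz]; linear_combination -(5/4)*hδA
  have hJ : J δ τ A ζ₄ = !![δ, -(1/4)*A; τ⁻¹*(5/4*A), -τ⁻¹] := by
    have e11 : deriv (fun a => f₁ a ζ₄) A = 1/4*((1-ζ₄) + 15/4*A^2 - 25/16*A^4) := by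
      have h : HasDerivAt (fun a : ℝ => f₁ a ζ₄) (1/4*((1-ζ₄) + 15/4*A^2 - 25/16*A^4)) A := by
        simp only [f₁]
        have h := ((((hasDerivAt_id A).const_mul (1-ζ₄)).add
          ((hasDerivAt_pow 3 A).const_mul (5/4 : ℝ))).sub
          ((hasDerivAt_pow 5 A).const_mul (5/16 : ℝ))).const_mul (1/4 : ℝ)
        convert h using 1
        rotate_right
        · push_cast; ring
        all_goals rfl
      exact h.deriv
    have e12 : deriv (fun z => f₁ A z) ζ₄ = -(1/4)*A := by
      have h : HasDerivAt (fun z : ℝ => f₁ A z) (-(1/4)*A) ζ₄ := by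
        simp only [f₁]
        have h := (((((hasDerivAt_const ζ₄ (1:ℝ)).sub (hasDerivAt_id ζ₄)).mul_const A).add_const
          (5/4*A^3)).sub_const (5/16*A^5)).const_mul (1/4 : ℝ)
        convert h using 1
        rotate_right
        · ring
        all_goals rfl
      exact h.deriv
    have e21 : deriv (fun a => f₂ δ τ a ζ₄) A = τ⁻¹*(5/4*A) := by
      have h : HasDerivAt (fun a : ℝ => f₂ δ τ a ζ₄) (τ⁻¹*(5/4*A)) A := by
        simp only [f₂]
        have h := (((hasDerivAt_pow 2 A).const_mul (5/8 : ℝ)).const_add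
          (-ζ₄ + δ + 1)).const_mul τ⁻¹
        convert h using 1
        rotate_right
        · push_cast; ring
        all_goals rfl
      exact h.deriv
    have e22 : deriv (fun z => f₂ δ τ A z) ζ₄ = -τ⁻¹ := by
      have h : HasDerivAt (fun z : ℝ => f₂ δ τ A z) (-τ⁻¹) ζ₄ := by
        simp only [f₂]
        have h := (((((hasDerivAt_id ζ₄).neg).add_const δ).add_const (1:ℝ)).add_const
          (5/8*A^2)).const_mul τ⁻¹
        convert h using 1
        rotate_right
        · ring
        all_goals rfl
      exact h.deriv
    rw [_root_.J, e11, e12, e21, e22, ha]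
  -- determinant
  have hdet : (J δ τ A ζ₄).det = τ⁻¹ * (5/16*A^2*(A^2-1)) := by
    rw [hJ, Matrix.det_fin_two_of]
    linear_combination -τ⁻¹ * hδA
  obtain ⟨D, hD⟩ : ∃ d : ℝ, (J δ τ A ζ₄).det = d := ⟨_, rfl⟩
  rw [hD] at hdet
  rw [hD]
  obtain ⟨T, hTdef⟩ : ∃ t : ℝ, t = δ - τ⁻¹ := ⟨_, rfl⟩
  have hd2 : D = δ*(-τ⁻¹) - (-(1/4)*A)*(τ⁻¹*(5/4*A)) := by
    rw [← hD, hJ, Matrix.det_fin_two_of]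
  -- real spectrum characterization
  have hmem : ∀ μ : ℝ, μ ∈ spectrum ℝ (J δ τ A ζ₄) ↔
      μ^2 - T*μ + D = 0 := by
    intro μ
    rw [hJ, spec2_aux]
    simp only [Set.mem_setOf_eq]
    constructor <;> intro h
    · linear_combination h - μ*hTdef + hd2
    · linear_combination h + μ*hTdef - hd2
  -- complex Jacobian
  have hJC : (J δ τ A ζ₄).map Complex.ofReal
      = !![(δ:ℂ), -(1/4)*(A:ℂ); (τ⁻¹:ℂ)*(5/4*(A:ℂ)), -(τ⁻¹:ℂ)] := by
    rw [hJ]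
    ext i j
    fin_cases i <;> fin_cases j <;> simp [Matrix.map_apply] <;> push_cast <;> ring
  have hTC : (T:ℂ) = (δ:ℂ) - ((τ:ℂ))⁻¹ := by rw [hTdef]; push_cast; ring
  have hd2C : (D:ℂ) = (δ:ℂ)*(-((τ:ℂ))⁻¹) - (-(1/4)*(A:ℂ))*(((τ:ℂ))⁻¹*(5/4*(A:ℂ))) := by
    rw [hd2]; push_cast; ring
  have hmemC : ∀ μ : ℂ, μ ∈ spectrum ℂ ((J δ τ A ζ₄).map Complex.ofReal) ↔
      μ^2 - (T:ℂ)*μ + (D:ℂ) = 0 := by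
    intro μ
    rw [hJC, spec2_aux]
    simp only [Set.mem_setOf_eq]
    constructor <;> intro h
    · linear_combination h - μ*hTC + hd2C
    · linear_combination h + μ*hTC - hd2C
  refine ⟨?_, ?_, ?_⟩
  · -- A < 1 : saddle
    intro hA1
    have hDneg : D < 0 := by
      rw [hdet]
      have hc1 : A^2 < 1 := by nlinarith [hA, hA1]
      have hc2 : 5/16*A^2*(A^2-1) < 0 := by nlinarith [hA, hc1]
      exact mul_neg_of_pos_of_neg hu hc2
    refine ⟨hDneg, ?_⟩
    obtain ⟨r, hr⟩ : ∃ r : ℝ, r = Real.sqrt (T^2 - 4*D) := ⟨_, rfl⟩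
    have hs0 : 0 < T^2 - 4*D := by nlinarith [sq_nonneg T]
    have hsq : r * r = T^2 - 4*D := by rw [hr]; exact Real.mul_self_sqrt hs0.le
    have habs : |T| < r := by
      have h := Real.sqrt_lt_sqrt (sq_nonneg T) (by linarith : T^2 < T^2 - 4*D)
      rw [Real.sqrt_sq_eq_abs] at h
      rw [hr]; exact h
    refine ⟨(T - r)/2, (T + r)/2, ?_, ?_, ?_⟩
    · have := le_abs_self T; linarith
    · have := neg_abs_le T; linarith
    · ext μ
      rw [hmem μ]
      simp only [Set.mem_insert_iff, Set.mem_singleton_iff]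
      constructor
      · intro h
        have hfac : (μ - (T - r)/2) * (μ - (T + r)/2) = 0 := by
          linear_combination h - (1/4)*hsq
        rcases mul_eq_zero.mp hfac with h' | h'
        · left; linarith [sub_eq_zero.mp h']
        · right; linarith [sub_eq_zero.mp h']
      · rintro (rfl | rfl)
        · linear_combination (1/4)*hsq
        · linear_combination (1/4)*hsq
  · -- A > 1 : stability criterion
    intro hA1
    have hDpos : 0 < D := by
      rw [hdet]
      have hc1 : 1 < A^2 := by nlinarith [hA, hA1]
      have hc3 : (0:ℝ) < A^2 - 1 := by linarith
      positivity
    refine ⟨hDpos, ?_, ?_⟩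
    · -- all eigenvalues stable → τ < 1/δ
      intro hall
      by_contra hcon
      push_neg at hcon
      have hTnn : 0 ≤ T := by
        have hc1 : 1 ≤ τ*δ := by rw [div_le_iff₀ hδ] at hcon; linarith
        have hc2 : τ⁻¹*(τ*δ) = δ := by
          rw [← mul_assoc, inv_mul_cancel₀ hτ.ne', one_mul]
        have hc3 := mul_le_mul_of_nonneg_left hc1 hu.le
        rw [hTdef]; linarith
      rcases le_or_gt (T^2 - 4*D) 0 with hs | hs
      · -- complex pair with real part T/2 ≥ 0
        obtain ⟨w, hw⟩ : ∃ w : ℝ, w = Real.sqrt (4*D - T^2) := ⟨_, rfl⟩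
        have hw2 : w * w = 4*D - T^2 := by
          rw [hw]; exact Real.mul_self_sqrt (by linarith)
        have hw2C : (w:ℂ) * (w:ℂ) = 4*(D:ℂ) - (T:ℂ)^2 := by
          have := congrArg (Complex.ofReal) hw2
          push_cast at this
          linear_combination this
        have hmemμ : ((T/2 : ℝ) : ℂ) + ((w/2 : ℝ) : ℂ) * Complex.I
            ∈ spectrum ℂ ((J δ τ A ζ₄).map Complex.ofReal) := by
          rw [hmemC]
          push_cast
          linear_combination ((w:ℂ)^2/4) * Complex.I_sq - (1/4) * hw2C
        have hlt := hall _ hmemμ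
        simp only [Complex.add_re, Complex.mul_re, Complex.I_re, Complex.I_im,
          Complex.ofReal_re, Complex.ofReal_im, mul_zero, mul_one, zero_mul,
          zero_sub, sub_zero, add_zero] at hlt
        linarith
      · -- real eigenvalue (T+√(T²-4D))/2 ≥ 0
        obtain ⟨r, hr⟩ : ∃ r : ℝ, r = Real.sqrt (T^2 - 4*D) := ⟨_, rfl⟩
        have hsq : r * r = T^2 - 4*D := by rw [hr]; exact Real.mul_self_sqrt hs.le
        have hsqC : (r:ℂ) * (r:ℂ) = (T:ℂ)^2 - 4*(D:ℂ) := by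
          have := congrArg (Complex.ofReal) hsq
          push_cast at this
          linear_combination this
        have hrnn : 0 ≤ r := by rw [hr]; exact Real.sqrt_nonneg _
        have hmemμ : ((((T + r)/2 : ℝ)) : ℂ)
            ∈ spectrum ℂ ((J δ τ A ζ₄).map Complex.ofReal) := by
          rw [hmemC]
          push_cast
          linear_combination (1/4) * hsqC
        have hlt := hall _ hmemμ
        simp only [Complex.ofReal_re] at hlt
        linarith
    · -- τ < 1/δ → all eigenvalues stable
      intro hτδ μ hμ
      have hTneg : T < 0 := by
        have hc1 : τ*δ < 1 := by rw [lt_div_iff₀ hδ] at hτδ; linarith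
        have hc2 : τ⁻¹*(τ*δ) = δ := by
          rw [← mul_assoc, inv_mul_cancel₀ hτ.ne', one_mul]
        have hc3 := mul_lt_mul_of_pos_left hc1 hu
        rw [hTdef]; nlinarith
      rw [hmemC] at hμ
      have hre := congrArg Complex.re hμ
      have him := congrArg Complex.im hμ
      simp only [pow_two, Complex.add_re, Complex.sub_re, Complex.mul_re, Complex.mul_im,
        Complex.add_im, Complex.sub_im, Complex.ofReal_re, Complex.ofReal_im,
        Complex.zero_re, Complex.zero_im] at hre him
      have hfac : μ.im * (2*μ.re - T) = 0 := by linear_combination him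
      rcases mul_eq_zero.mp hfac with h' | h'
      · have hre' : μ.re^2 - T*μ.re + D = 0 := by
          rw [h'] at hre; linear_combination hre
        by_contra hx
        push_neg at hx
        nlinarith [hre', hx, hTneg, hDpos]
      · have hx : μ.re = T/2 := by linarith
        rw [hx]; linarith
  · -- Hopf bifurcation
    intro hA1 hτδ
    have hDpos : 0 < D := by
      rw [hdet]
      have hc1 : 1 < A^2 := by nlinarith [hA, hA1]
      have hc3 : (0:ℝ) < A^2 - 1 := by linarith
      positivity
    have hT0 : T = 0 := by
      rw [hTdef, hτδ, one_div, inv_inv]; ring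
    have hT0C : (T:ℂ) = 0 := by exact_mod_cast congrArg (Complex.ofReal) hT0
    obtain ⟨w, hw⟩ : ∃ w : ℝ, w = Real.sqrt D := ⟨_, rfl⟩
    rw [← hw]
    have hw2 : w * w = D := by rw [hw]; exact Real.mul_self_sqrt hDpos.le
    have hw2C : (w:ℂ) * (w:ℂ) = (D:ℂ) := by exact_mod_cast congrArg (Complex.ofReal) hw2
    ext μ
    rw [hmemC μ]
    simp only [Set.mem_insert_iff, Set.mem_singleton_iff]
    constructor
    · intro h
      have hfac : (μ - Complex.I * (w:ℂ)) * (μ + Complex.I * (w:ℂ)) = 0 := by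
        linear_combination h + μ*hT0C - ((w:ℂ)^2) * Complex.I_sq + hw2C
      rcases mul_eq_zero.mp hfac with h' | h'
      · left; exact sub_eq_zero.mp h'
      · right; exact eq_neg_of_add_eq_zero_left h'
    · rintro (rfl | rfl)
      · linear_combination -(Complex.I*(w:ℂ))*hT0C + ((w:ℂ)^2) * Complex.I_sq - hw2C
      · linear_combination (Complex.I*(w:ℂ))*hT0C + ((w:ℂ)^2) * Complex.I_sq - hw2C
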